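/- Let f, g be real-analytic near 0 with x·g(x) > 0 for x ≠ 0, F(x) = ∫₀ˣ f, φ(x) = ∫₀ˣ e^{F(s)} ds, and X(x) defined near 0 by X(x)² /2 = ∫₀ˣ g(s)e^{2F(s)} ds with X(x)·x > 0. If g'(x) + g(x)f(x) = 1 for all x near 0, then φ(x) = X(x) and g(x)e^{F(x)} = X(x) near 0 (i.e., the Urabe function h is identically zero). -/

import Mathlib

open intervalIntegral Real

/-- Chouikha's criterion: if f, g are analytic near 0, x·g(x) > 0 for x ≠ 0 near 0,
and g' + gf = 1 near 0, then φ = X and g·e^F = X near 0 (the Urabe function is 0). -/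
theorem stmt_13 (f g : ℝ → ℝ)
    (hf : ∀ᶠ x in nhds (0:ℝ), AnalyticAt ℝ f x)
    (hg : ∀ᶠ x in nhds (0:ℝ), AnalyticAt ℝ g x)
    (hg0 : g 0 = 0) (hg'0 : deriv g 0 = 1)
    (hxg : ∀ᶠ x in nhds (0:ℝ), x ≠ 0 → x * g x > 0)
    (F φ X : ℝ → ℝ)
    (hF : ∀ x, F x = ∫ s in (0:ℝ)..x, f s)
    (hφ : ∀ x, φ x = ∫ s in (0:ℝ)..x, Real.exp (F s))
    (hX : ∀ᶠ x in nhds (0:ℝ),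
      (X x) ^ 2 / 2 = (∫ s in (0:ℝ)..x, g s * Real.exp (2 * F s)) ∧
      (x ≠ 0 → X x * x > 0))
    (hiso : ∀ᶠ x in nhds (0:ℝ), deriv g x + g x * f x = 1) :
    ∀ᶠ x in nhds (0:ℝ), φ x = X x ∧ g x * Real.exp (F x) = X x := by
  obtain ⟨ε, hε, hball⟩ := Metric.eventually_nhds_iff_ball.1
    (hf.and (hg.and (hX.and hiso)))
  set B := Metric.ball (0:ℝ) ε with hB
  have hBopen : IsOpen B := Metric.isOpen_ball
  have hBconv : Convex ℝ B := convex_ball 0 ε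
  have h0B : (0:ℝ) ∈ B := Metric.mem_ball_self hε
  have hsub : ∀ x ∈ B, Set.uIcc (0:ℝ) x ⊆ B := fun x hx =>
    (hBconv.ordConnected).uIcc_subset h0B hx
  have hfc : ∀ x ∈ B, ContinuousAt f x := fun x hx => (hball x hx).1.continuousAt
  have hgc : ∀ x ∈ B, ContinuousAt g x := fun x hx => (hball x hx).2.1.continuousAt
  -- generic FTC on the ball
  have key : ∀ (u : ℝ → ℝ), (∀ x ∈ B, ContinuousAt u x) → ∀ x ∈ B,
      HasDerivAt (fun y => ∫ s in (0:ℝ)..y, u s) (u x) x := by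
    intro u hu x hx
    refine intervalIntegral.integral_hasDerivAt_right ?_
      (ContinuousAt.stronglyMeasurableAtFilter hBopen hu x hx) (hu x hx)
    exact (ContinuousOn.mono (continuousOn_of_forall_continuousAt hu)
      (hsub x hx)).intervalIntegrable
  -- F has derivative f on B
  have hFd : ∀ x ∈ B, HasDerivAt F (f x) x := by
    intro x hx
    have : F = fun y => ∫ s in (0:ℝ)..y, f s := funext hF
    rw [this]; exact key f hfc x hx
  have hFc : ∀ x ∈ B, ContinuousAt F x := fun x hx => (hFd x hx).continuousAt
  have hefc : ∀ x ∈ B, ContinuousAt (fun y => Real.exp (F y)) x := fun x hx =>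
    (Real.continuous_exp.continuousAt).comp (hFc x hx)
  -- φ has derivative exp (F x) on B
  have hφd : ∀ x ∈ B, HasDerivAt φ (Real.exp (F x)) x := by
    intro x hx
    have : φ = fun y => ∫ s in (0:ℝ)..y, Real.exp (F s) := funext hφ
    rw [this]; exact key _ hefc x hx
  -- u := g * exp ∘ F has derivative exp (F x) on B
  have hud : ∀ x ∈ B, HasDerivAt (fun y => g y * Real.exp (F y)) (Real.exp (F x)) x := by
    intro x hx
    have h1 : HasDerivAt g (deriv g x) x := ((hball x hx).2.1.differentiableAt).hasDerivAt
    have h2 : HasDerivAt (fun y => Real.exp (F y)) (Real.exp (F x) * f x) x :=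
      (Real.hasDerivAt_exp (F x)).comp x (hFd x hx)
    have h3 := h1.mul h2
    have hiso' := (hball x hx).2.2.2
    have : deriv g x * Real.exp (F x) + g x * (Real.exp (F x) * f x)
        = Real.exp (F x) := by ring_nf; nlinarith [Real.exp_pos (F x), hiso']
    rw [← this]; exact h3
  -- φ = g * exp ∘ F on B
  have heq1 : ∀ x ∈ B, φ x = g x * Real.exp (F x) := by
    have hdiff : DifferentiableOn ℝ (fun y => φ y - g y * Real.exp (F y)) B := fun x hx =>
      (((hφd x hx).sub (hud x hx)).differentiableAt).differentiableWithinAt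
    intro x hx
    have hc : (fun y => φ y - g y * Real.exp (F y)) x
        = (fun y => φ y - g y * Real.exp (F y)) 0 := by
      refine hBconv.is_const_of_fderivWithin_eq_zero hdiff (fun z hz => ?_) hx h0B
      rw [fderivWithin_of_isOpen hBopen hz]
      have : HasDerivAt (fun y => φ y - g y * Real.exp (F y)) 0 z := by
        have h := (hφd z hz).sub (hud z hz); rw [sub_self] at h; exact h
      rw [this.hasFDerivAt.fderiv]
      ext t; simp
    have hF0 : F 0 = 0 := by rw [hF]; simp
    have hφ0 : φ 0 = 0 := by rw [hφ]; simp
    simp only [hφ0, hg0, hF0, zero_mul, sub_zero] at hc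
    linarith [hc]
  -- φ^2/2 equals the integral of g e^{2F}
  have hgec : ∀ x ∈ B, ContinuousAt (fun y => g y * Real.exp (2 * F y)) x := fun x hx =>
    (hgc x hx).mul ((Real.continuous_exp.continuousAt).comp ((continuous_const.continuousAt.mul (hFc x hx))))
  have heq2 : ∀ x ∈ B, φ x ^ 2 / 2 = ∫ s in (0:ℝ)..x, g s * Real.exp (2 * F s) := by
    have hd1 : ∀ x ∈ B, HasDerivAt (fun y => φ y ^ 2 / 2) (g x * Real.exp (2 * F x)) x := by
      intro x hx
      have h1 : HasDerivAt (fun y => φ y ^ 2 / 2) (φ x * Real.exp (F x)) x := by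
        have h0 : HasDerivAt (fun y => φ y ^ 2 / 2) (((2:ℕ):ℝ) * φ x ^ (2 - 1) * Real.exp (F x) / 2) x :=
          ((hφd x hx).fun_pow 2).div_const 2
        convert h0 using 1
        ring
      have : φ x * Real.exp (F x) = g x * Real.exp (2 * F x) := by
        rw [heq1 x hx, two_mul, Real.exp_add]; ring
      rwa [this] at h1
    have hd2 := key _ hgec
    have hdiff : DifferentiableOn ℝ
        (fun y => φ y ^ 2 / 2 - ∫ s in (0:ℝ)..y, g s * Real.exp (2 * F s)) B := fun x hx =>
      (((hd1 x hx).sub (hd2 x hx)).differentiableAt).differentiableWithinAt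
    intro x hx
    have hc : (fun y => φ y ^ 2 / 2 - ∫ s in (0:ℝ)..y, g s * Real.exp (2 * F s)) x
        = (fun y => φ y ^ 2 / 2 - ∫ s in (0:ℝ)..y, g s * Real.exp (2 * F s)) 0 := by
      refine hBconv.is_const_of_fderivWithin_eq_zero hdiff (fun z hz => ?_) hx h0B
      rw [fderivWithin_of_isOpen hBopen hz]
      have : HasDerivAt (fun y => φ y ^ 2 / 2 - ∫ s in (0:ℝ)..y, g s * Real.exp (2 * F s))
          0 z := by have h := (hd1 z hz).sub (hd2 z hz); rw [sub_self] at h; exact h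
      rw [this.hasFDerivAt.fderiv]
      ext t; simp
    have hφ0 : φ 0 = 0 := by rw [hφ]; simp
    simp only [hφ0] at hc
    norm_num at hc
    linarith [hc]
  -- sign of φ
  have hφsign : ∀ x ∈ B, x ≠ 0 → φ x * x > 0 := by
    intro x hx hx0
    rcases hx0.lt_or_gt with h | h
    · have hpos : 0 < ∫ s in x..(0:ℝ), Real.exp (F s) := by
        refine intervalIntegral_pos_of_pos_on ?_ (fun s hs => Real.exp_pos _) h
        refine (ContinuousOn.mono (continuousOn_of_forall_continuousAt hefc) ?_).intervalIntegrable
        rw [Set.uIcc_comm]; exact hsub x hx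
      have : φ x < 0 := by
        rw [hφ, intervalIntegral.integral_symm]; linarith
      exact mul_pos_of_neg_of_neg this h
    · have hpos : 0 < ∫ s in (0:ℝ)..x, Real.exp (F s) := by
        refine intervalIntegral_pos_of_pos_on ?_ (fun s hs => Real.exp_pos _) h
        exact (ContinuousOn.mono (continuousOn_of_forall_continuousAt hefc)
          (hsub x hx)).intervalIntegrable
      have : 0 < φ x := by rw [hφ]; exact hpos
      exact mul_pos this h
  -- conclude
  rw [Metric.eventually_nhds_iff_ball]
  refine ⟨ε, hε, fun x hx => ?_⟩
  have hXx := (hball x hx).2.2.1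
  have hsq : φ x ^ 2 = X x ^ 2 := by
    have := heq2 x hx
    rw [← hXx.1] at this
    linarith
  have hφX : φ x = X x := by
    rcases eq_or_ne x 0 with rfl | hx0
    · have hφ0 : φ 0 = 0 := by rw [hφ]; simp
      have hX0 : X 0 = 0 := by
        have := hXx.1
        simp at this
        nlinarith [this]
      rw [hφ0, hX0]
    · rcases sq_eq_sq_iff_eq_or_eq_neg.1 hsq with h | h
      · exact h
      · exfalso
        have h1 := hφsign x hx hx0
        have h2 := hXx.2 hx0
        rw [h, neg_mul] at h1
        linarith
  exact ⟨hφX, by rw [← heq1 x hx, hφX]⟩
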